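/- Let Φ: X ⊸ X be a multi-valued function on a complete metric space X whose inverse Φ⁻¹ is compact-valued and contracting with Lipschitz constant λ < 1, and let F⁻ denote the micro-fractal 𝔽(Φ⁻¹) (the unique nonempty compact set with Φ⁻¹(F⁻) = F⁻). Suppose for some k ≥ 1 the number δ = inf{d(x,y) : x ∈ Φᵏ(Fix(Φ)) \ Φ^{k−1}(Fix(Φ)), y ∈ F⁻} is strictly positive. Then for every n ∈ ω, setting Eₙ = {x ∈ X : d(x, F⁻) ≤ δ/λⁿ}, one has Eₙ ∩ (⋃_m Φᵐ(Fix(Φ))) = Eₙ ∩ Φ^{k+n}(Fix(Φ)). -/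

import Mathlib

open Set

/-- Image of a set under a multi-valued function (relation) `Φ ⊆ X × X`. -/
def mImage {X : Type*} (Φ : Set (X × X)) (A : Set X) : Set X := {y | ∃ x ∈ A, (x, y) ∈ Φ}

/-- Iterates `Φⁿ(A)`. -/
def mIter {X : Type*} (Φ : Set (X × X)) : ℕ → Set X → Set X
  | 0, A => A
  | n + 1, A => mImage Φ (mIter Φ n A)

/-- Fixed points of a multi-valued function. -/
def mFix {X : Type*} (Φ : Set (X × X)) : Set X := {x | (x, x) ∈ Φ}

/-- The value `Φ(x)` of a multi-valued function at a point. -/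
def mVal {X : Type*} (Φ : Set (X × X)) (x : X) : Set X := {y | (x, y) ∈ Φ}

/-- The inverse multi-valued function. -/
def mInv {X : Type*} (Φ : Set (X × X)) : Set (X × X) := {p | (p.2, p.1) ∈ Φ}

lemma mImage_mono {X : Type*} (Φ : Set (X × X)) {A B : Set X} (h : A ⊆ B) :
    mImage Φ A ⊆ mImage Φ B := fun _ ⟨x, hx, hxy⟩ => ⟨x, h hx, hxy⟩

lemma mIter_mono_set {X : Type*} (Φ : Set (X × X)) {A B : Set X} (h : A ⊆ B) :
    ∀ n, mIter Φ n A ⊆ mIter Φ n B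
  | 0 => h
  | n + 1 => mImage_mono Φ (mIter_mono_set Φ h n)

lemma mIter_image_comm {X : Type*} (Φ : Set (X × X)) (A : Set X) :
    ∀ n, mIter Φ n (mImage Φ A) = mImage Φ (mIter Φ n A)
  | 0 => rfl
  | n + 1 => by
    show mImage Φ (mIter Φ n (mImage Φ A)) = mImage Φ (mIter Φ (n+1) A)
    rw [mIter_image_comm Φ A n]; rfl

lemma mFix_subset_image {X : Type*} (Φ : Set (X × X)) :
    mFix Φ ⊆ mImage Φ (mFix Φ) := fun x hx => ⟨x, hx, hx⟩

lemma mIter_fix_succ {X : Type*} (Φ : Set (X × X)) (n : ℕ) :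
    mIter Φ n (mFix Φ) ⊆ mIter Φ (n + 1) (mFix Φ) := by
  have := mIter_mono_set Φ (mFix_subset_image Φ) n
  rw [mIter_image_comm Φ (mFix Φ) n] at this
  exact this

lemma mIter_fix_mono {X : Type*} (Φ : Set (X × X)) {m m' : ℕ} (h : m ≤ m') :
    mIter Φ m (mFix Φ) ⊆ mIter Φ m' (mFix Φ) := by
  induction h with
  | refl => exact subset_rfl
  | step _ ih => exact ih.trans (mIter_fix_succ Φ _)

theorem stmt19 {X : Type*} [MetricSpace X] [CompleteSpace X]
    (Φ : Set (X × X)) (lam : ℝ) (hlam0 : 0 ≤ lam) (hlam : lam < 1)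
    (hc : ∀ y, IsCompact (mVal (mInv Φ) y)) (hne : ∀ y, (mVal (mInv Φ) y).Nonempty)
    (hlip : ∀ x y, Metric.hausdorffDist (mVal (mInv Φ) x) (mVal (mInv Φ) y) ≤ lam * dist x y)
    (Fm : Set X) (hFc : IsCompact Fm) (hFne : Fm.Nonempty)
    (hFfix : mImage (mInv Φ) Fm = Fm)
    (hFuniq : ∀ K : Set X, IsCompact K → K.Nonempty → mImage (mInv Φ) K = K → K = Fm)
    (k : ℕ) (hk : 1 ≤ k) (δ : ℝ)
    (hδ : δ = sInf {r | ∃ x ∈ mIter Φ k (mFix Φ) \ mIter Φ (k - 1) (mFix Φ),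
      ∃ y ∈ Fm, r = dist x y})
    (hδpos : 0 < δ) :
    ∀ n : ℕ,
      {x | Metric.infDist x Fm ≤ δ / lam ^ n} ∩ (⋃ m, mIter Φ m (mFix Φ)) =
      {x | Metric.infDist x Fm ≤ δ / lam ^ n} ∩ mIter Φ (k + n) (mFix Φ) := by
  -- The contraction step: infDist y Fm ≤ lam * infDist x Fm whenever (y,x) ∈ Φ
  have contract : ∀ x y : X, (y, x) ∈ Φ → Metric.infDist y Fm ≤ lam * Metric.infDist x Fm := by
    intro x y hyx
    obtain ⟨z, hz, hdz⟩ := hFc.exists_infDist_eq_dist hFne x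
    have hsub : mVal (mInv Φ) z ⊆ Fm := by
      intro w hw
      rw [← hFfix]
      exact ⟨z, hz, hw⟩
    have h1 : Metric.infDist y Fm ≤ Metric.infDist y (mVal (mInv Φ) z) :=
      Metric.infDist_le_infDist_of_subset hsub (hne z)
    have hfin : EMetric.hausdorffEdist (mVal (mInv Φ) x) (mVal (mInv Φ) z) ≠ ⊤ :=
      Metric.hausdorffEdist_ne_top_of_nonempty_of_bounded (hne x) (hne z)
        (hc x).isBounded (hc z).isBounded
    have h2 : Metric.infDist y (mVal (mInv Φ) z) ≤
        Metric.hausdorffDist (mVal (mInv Φ) x) (mVal (mInv Φ) z) :=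
      Metric.infDist_le_hausdorffDist_of_mem (by exact hyx) hfin
    calc Metric.infDist y Fm ≤ Metric.hausdorffDist (mVal (mInv Φ) x) (mVal (mInv Φ) z) :=
          h1.trans h2
      _ ≤ lam * dist x z := hlip x z
      _ = lam * Metric.infDist x Fm := by rw [hdz]
  -- Key lemma: points in Φ^{k+j}(Fix) \ Φ^{k+j-1}(Fix) are at distance ≥ δ/λ^j from Fm
  have key : ∀ j : ℕ, ∀ x : X,
      x ∈ mIter Φ (k + j) (mFix Φ) \ mIter Φ (k + j - 1) (mFix Φ) →
      δ ≤ lam ^ j * Metric.infDist x Fm := by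
    intro j
    induction j with
    | zero =>
      intro x hx
      obtain ⟨y, hy, hdy⟩ := hFc.exists_infDist_eq_dist hFne x
      have hbdd : BddBelow {r | ∃ x ∈ mIter Φ k (mFix Φ) \ mIter Φ (k - 1) (mFix Φ),
          ∃ y ∈ Fm, r = dist x y} := by
        refine ⟨0, fun r hr => ?_⟩
        obtain ⟨x', _, y', _, rfl⟩ := hr
        exact dist_nonneg
      have hmem : dist x y ∈ {r | ∃ x ∈ mIter Φ k (mFix Φ) \ mIter Φ (k - 1) (mFix Φ),
          ∃ y ∈ Fm, r = dist x y} := ⟨x, by simpa using hx, y, hy, rfl⟩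
      have := hδ ▸ csInf_le hbdd hmem
      simpa [hdy] using this
    | succ j ih =>
      intro x hx
      obtain ⟨hx1, hx2⟩ := hx
      obtain ⟨y, hy, hyx⟩ : ∃ y ∈ mIter Φ (k + j) (mFix Φ), (y, x) ∈ Φ := hx1
      have hy2 : y ∉ mIter Φ (k + j - 1) (mFix Φ) := by
        intro hy'
        apply hx2
        have : y ∈ mIter Φ (k + j) (mFix Φ) := mIter_fix_mono Φ (Nat.sub_le _ _) hy'
        have hkj : k + (j + 1) - 1 = k + j - 1 + 1 := by omega
        rw [hkj]
        exact ⟨y, hy', hyx⟩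
      have hih := ih y ⟨hy, hy2⟩
      have hcon := contract x y hyx
      calc δ ≤ lam ^ j * Metric.infDist y Fm := hih
        _ ≤ lam ^ j * (lam * Metric.infDist x Fm) :=
            mul_le_mul_of_nonneg_left hcon (pow_nonneg hlam0 j)
        _ = lam ^ (j + 1) * Metric.infDist x Fm := by ring
  intro n
  ext x
  simp only [mem_inter_iff, mem_setOf_eq, mem_iUnion]
  constructor
  · rintro ⟨hdx, m, hm⟩
    refine ⟨hdx, ?_⟩
    by_contra hnot
    -- minimal j with x ∈ mIter Φ (k + j)
    have hmk : k ≤ m := by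
      by_contra h
      exact hnot (mIter_fix_mono Φ (by omega) hm)
    have hex : ∃ j, x ∈ mIter Φ (k + j) (mFix Φ) := ⟨m - k, by rwa [Nat.add_sub_cancel' hmk]⟩
    classical
    let j := Nat.find hex
    have hxj : x ∈ mIter Φ (k + j) (mFix Φ) := Nat.find_spec hex
    have hjn : n < j := by
      by_contra h
      exact hnot (mIter_fix_mono Φ (by omega) hxj)
    have hj1 : 1 ≤ j := by omega
    have hxj' : x ∉ mIter Φ (k + j - 1) (mFix Φ) := by
      intro h
      have : x ∈ mIter Φ (k + (j - 1)) (mFix Φ) := by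
        have : k + j - 1 = k + (j - 1) := by omega
        rwa [this] at h
      exact Nat.find_min hex (by omega) this
    have hkey := key j x ⟨hxj, hxj'⟩
    -- δ ≤ lam^j * infDist x Fm ≤ lam^j * (δ / lam^n) ≤ lam * δ < δ
    have hd0 : 0 ≤ Metric.infDist x Fm := Metric.infDist_nonneg
    have hlamn : (0:ℝ) < lam ^ n ∨ lam ^ n = 0 := by
      rcases eq_or_lt_of_le (pow_nonneg hlam0 n) with h | h
      · exact Or.inr h.symm
      · exact Or.inl h
    rcases hlamn with hpos | hzero
    · have h1 : lam ^ j * Metric.infDist x Fm ≤ lam ^ j * (δ / lam ^ n) :=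
        mul_le_mul_of_nonneg_left hdx (pow_nonneg hlam0 j)
      have h2 : lam ^ j * (δ / lam ^ n) = lam ^ (j - n) * δ := by
        have : j = (j - n) + n := by omega
        rw [this, pow_add, Nat.add_sub_cancel]
        field_simp
      have h3 : lam ^ (j - n) * δ ≤ lam * δ := by
        have : lam ^ (j - n) ≤ lam ^ 1 :=
          pow_le_pow_of_le_one hlam0 hlam.le (by omega)
        simpa using mul_le_mul_of_nonneg_right this hδpos.le
      have h4 : lam * δ < δ := by nlinarith
      linarith [hkey, h1, h2 ▸ (h1.trans_eq h2)]
    · -- lam ^ n = 0, so lam = 0 and n ≥ 1... then lam ^ j = 0 since j ≥ 1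
      have hlamz : lam = 0 := by
        by_contra h
        exact (pow_ne_zero n h) hzero
      have : lam ^ j = 0 := by
        rw [hlamz]
        exact zero_pow (by omega)
      rw [this, zero_mul] at hkey
      linarith
  · rintro ⟨hdx, hm⟩
    exact ⟨hdx, k + n, hm⟩
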